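/- Let k ≥ 0 and d ≥ 1 be integers. There exist constants c₁, c₂ > 0 depending only on k and d such that for every N > k+1 with n = N^d and every L > 0: 𝒞_{n,d}^k(L) ⊆ 𝒲_{n,d}^{k+1}( c₁ L n^{1/2 − (k+1)/d} ) ⊆ 𝒯_{n,d}^k( c₂ L n^{1 − (k+1)/d} ). That is, every vector of lattice evaluations of a function in the Hölder class C^k(L; [0,1]^d) satisfies ‖D_{n,d}^{(k+1)} θ‖₂ ≤ c₁ L n^{1/2−(k+1)/d}, and every θ with ‖D_{n,d}^{(k+1)} θ‖₂ ≤ ρ satisfies ‖D_{n,d}^{(k+1)} θ‖₁ ≤ (c₂/c₁)·√(dn)·ρ ≤ c₂ L n^{1−(k+1)/d}. -/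

import Mathlib

open scoped BigOperators ENNReal NNReal
open MeasureTheory ProbabilityTheory Matrix

noncomputable section

/-- Univariate forward difference matrix `D^{(1)}_M ∈ ℝ^{(M-1)×M}`, with entries
`(D^{(1)}_M)_{i,i} = -1`, `(D^{(1)}_M)_{i,i+1} = 1` and `0` otherwise. -/
def D1 (M : ℕ) : Matrix (Fin (M - 1)) (Fin M) ℝ :=
  Matrix.of fun i j => if (j : ℕ) = (i : ℕ) then -1 else if (j : ℕ) = (i : ℕ) + 1 then 1 else 0

/-- Univariate difference operator of order `m` on `N` points:
`D^{(0)}_N = I_N` and `D^{(m+1)}_N = D^{(1)}_{N-m} D^{(m)}_N`.  In particular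
`Dop N (k+1)` is the operator `D_N^{(k+1)} ∈ ℝ^{(N-k-1) × N}`. -/
def Dop (N : ℕ) : (m : ℕ) → Matrix (Fin (N - m)) (Fin N) ℝ
  | 0 => Matrix.of fun i j => if (i : ℕ) = (j : ℕ) then 1 else 0
  | m + 1 => D1 (N - m) * Dop N m

/-- Row index type of the order-`m` KTF penalty matrix: a coordinate direction `j`,
a row index of the univariate operator, and the values of the other `d-1` lattice
coordinates. -/
abbrev KtfIdx (N d m : ℕ) :=
  Σ j : Fin d, Fin (N - m) × ({l : Fin d // l ≠ j} → Fin N)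

/-- Order-`m` KTF penalty matrix on the lattice `{1,…,N}^d`: the vertical block
concatenation over coordinate directions `j` of `I_N ⊗ ⋯ ⊗ D^{(m)}_N ⊗ ⋯ ⊗ I_N`
(`D^{(m)}_N` in the `j`-th factor). -/
def ktfMat (N d m : ℕ) : Matrix (KtfIdx N d m) (Fin d → Fin N) ℝ :=
  Matrix.of fun p x =>
    Dop N m p.2.1 (x p.1) *
      ∏ l : {l : Fin d // l ≠ p.1}, (if p.2.2 l = x l.1 then (1:ℝ) else 0)

/-- The unit cube `[0,1]^d`. -/
def unitCube (d : ℕ) : Set (Fin d → ℝ) := {x | ∀ i, 0 ≤ x i ∧ x i ≤ 1}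

/-- Membership in the Hölder class `C^k(L; [0,1]^d)`: `f` is `k` times continuously
differentiable on the cube and all of its order-`k` partial derivatives are
`L`-Lipschitz with respect to the Euclidean norm. -/
def HolderClass (k d : ℕ) (L : ℝ) (f : (Fin d → ℝ) → ℝ) : Prop :=
  ContDiffOn ℝ k f (unitCube d) ∧
    ∀ m : Fin k → Fin d, ∀ x ∈ unitCube d, ∀ z ∈ unitCube d,
      |iteratedFDerivWithin ℝ k f (unitCube d) x (fun i => Pi.single (m i) 1) -
          iteratedFDerivWithin ℝ k f (unitCube d) z (fun i => Pi.single (m i) 1)| ≤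
        L * Real.sqrt (∑ i, (x i - z i) ^ 2)

section AuxiliaryLemmas
open Set

/-! ### Univariate finite differences -/

/-- Forward difference operator of order `m` with step `h`. -/
def fdiff (h : ℝ) : ℕ → (ℝ → ℝ) → (ℝ → ℝ)
  | 0, G => G
  | m + 1, G => fun x => fdiff h m G (x + h) - fdiff h m G x

lemma fdiff_succ_comm (h : ℝ) (m : ℕ) (G : ℝ → ℝ) :
    fdiff h (m + 1) G = fdiff h m (fun y => G (y + h) - G y) := by
  induction m generalizing G with
  | zero => rfl
  | succ m ih =>
    show (fun x => fdiff h (m+1) G (x + h) - fdiff h (m+1) G x) = _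
    rw [ih G]
    rfl

lemma fdiff_sub (h : ℝ) (m : ℕ) (G H : ℝ → ℝ) (x : ℝ) :
    fdiff h m (fun y => G y - H y) x = fdiff h m G x - fdiff h m H x := by
  induction m generalizing x with
  | zero => rfl
  | succ m ih =>
    show fdiff h m _ (x + h) - fdiff h m _ x = _
    rw [ih, ih]
    show _ = (fdiff h m G (x+h) - fdiff h m G x) - (fdiff h m H (x+h) - fdiff h m H x)
    ring

lemma fdiff_bound (h : ℝ) (hh : 0 ≤ h) (m : ℕ) (R : ℝ → ℝ) (x B : ℝ)
    (hB : ∀ t, x ≤ t → t ≤ x + m * h → |R t| ≤ B) :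
    |fdiff h m R x| ≤ 2 ^ m * B := by
  induction m generalizing x with
  | zero =>
    simpa [fdiff] using hB x le_rfl (by simp)
  | succ m ih =>
    show |fdiff h m R (x + h) - fdiff h m R x| ≤ _
    have h1 : |fdiff h m R (x + h)| ≤ 2 ^ m * B := by
      refine ih (x + h) fun t ht1 ht2 => hB t (by linarith) (by push_cast; nlinarith)
    have h2 : |fdiff h m R x| ≤ 2 ^ m * B := by
      refine ih x fun t ht1 ht2 => hB t ht1 (by push_cast; nlinarith)
    calc |fdiff h m R (x + h) - fdiff h m R x| ≤ _ + _ := abs_sub _ _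
    _ ≤ 2 ^ m * B + 2 ^ m * B := add_le_add h1 h2
    _ = 2 ^ (m + 1) * B := by ring

lemma fdiff_poly (h : ℝ) (m : ℕ) (P : Polynomial ℝ) (hP : P.natDegree ≤ m) (x : ℝ) :
    fdiff h (m + 1) (fun y => P.eval y) x = 0 := by
  induction m generalizing P x with
  | zero =>
    obtain ⟨c, rfl⟩ := Polynomial.natDegree_eq_zero.mp (Nat.le_zero.mp hP)
    show Polynomial.eval (x + h) _ - Polynomial.eval x _ = 0
    simp
  | succ m ih =>
    rw [fdiff_succ_comm]
    set Q := P.comp (Polynomial.X + Polynomial.C h) - P with hQ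
    have hev : (fun y => Polynomial.eval (y + h) P - Polynomial.eval y P)
        = fun y => Q.eval y := by
      funext y; simp [hQ]
    have hQd : Q.natDegree ≤ m := by
      by_cases h0 : Q = 0
      · simp [h0]
      by_cases hP0 : P.natDegree = 0
      · obtain ⟨c, rfl⟩ := Polynomial.natDegree_eq_zero.mp hP0
        exfalso; apply h0; simp [hQ]
      have hP0' : P ≠ 0 := fun hc => hP0 (by simp [hc])
      have hlc : (P.comp (Polynomial.X + Polynomial.C h)).leadingCoeff = P.leadingCoeff := by
        rw [Polynomial.leadingCoeff_comp (by simp)]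
        simp
      have hcomp0 : P.comp (Polynomial.X + Polynomial.C h) ≠ 0 := by
        intro hc
        apply hP0'
        rw [← Polynomial.leadingCoeff_eq_zero, ← hlc, hc, Polynomial.leadingCoeff_zero]
      have hdeg : (P.comp (Polynomial.X + Polynomial.C h)).degree = P.degree := by
        rw [Polynomial.degree_eq_natDegree hcomp0, Polynomial.degree_eq_natDegree hP0',
          Polynomial.natDegree_comp, Polynomial.natDegree_X_add_C, mul_one]
      have hlt : Q.degree < P.degree := by
        rw [hQ]
        exact hdeg ▸ Polynomial.degree_sub_lt hdeg hcomp0 hlc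
      have : Q.natDegree < P.natDegree := by
        exact Polynomial.natDegree_lt_natDegree h0 hlt
      omega
    rw [show (fun y => Polynomial.eval (y + h) P - Polynomial.eval y P) = fun y => Q.eval y from hev]
    exact ih Q hQd x

/-! ### Taylor's theorem with Lipschitz remainder -/

lemma taylor_lip : ∀ (k : ℕ) (G : ℝ → ℝ) (a b : ℝ), a < b →
    ContDiffOn ℝ k G (Icc a b) →
    ∀ L : ℝ, 0 ≤ L →
    (∀ s ∈ Icc a b, ∀ t ∈ Icc a b,
      |iteratedDerivWithin k G (Icc a b) s - iteratedDerivWithin k G (Icc a b) t| ≤ L * |s - t|) →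
    ∀ x₀ ∈ Icc a b, ∀ y ∈ Icc a b, x₀ ≤ y →
    |G y - ∑ i ∈ Finset.range (k + 1),
        iteratedDerivWithin i G (Icc a b) x₀ * (y - x₀) ^ i / i.factorial| ≤
      L * (y - x₀) ^ (k + 1) := by
  intro k
  induction k with
  | zero =>
    intro G a b hab hG L hL0 hLip x₀ hx₀ y hy hxy
    have := hLip y hy x₀ hx₀
    simp only [iteratedDerivWithin_zero] at this
    simpa [abs_of_nonneg (sub_nonneg.mpr hxy)] using this
  | succ k ih =>
    intro G a b hab hG L hL0 hLip x₀ hx₀ y hy hxy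
    have hud : UniqueDiffOn ℝ (Icc a b) := uniqueDiffOn_Icc hab
    set G' := derivWithin G (Icc a b) with hG'
    have hG'diff : ContDiffOn ℝ k G' (Icc a b) := by
      apply hG.derivWithin hud
      exact_mod_cast le_refl _
    have hid : ∀ s ∈ Icc a b, iteratedDerivWithin k G' (Icc a b) s
        = iteratedDerivWithin (k + 1) G (Icc a b) s := by
      intro s hs
      rw [iteratedDerivWithin_succ']
    have hLip' : ∀ s ∈ Icc a b, ∀ t ∈ Icc a b,
        |iteratedDerivWithin k G' (Icc a b) s - iteratedDerivWithin k G' (Icc a b) t| ≤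
          L * |s - t| := by
      intro s hs t ht
      rw [hid s hs, hid t ht]
      exact hLip s hs t ht
    have hIH := ih G' a b hab hG'diff L hL0 hLip' x₀ hx₀
    set c : ℕ → ℝ := fun i => iteratedDerivWithin i G (Icc a b) x₀ with hc
    have hc' : ∀ i, iteratedDerivWithin i G' (Icc a b) x₀ = c (i + 1) := by
      intro i
      show _ = iteratedDerivWithin (i + 1) G (Icc a b) x₀
      rw [iteratedDerivWithin_succ']
    set F : ℝ → ℝ := fun t =>
      G t - ∑ i ∈ Finset.range (k + 1), c (i + 1) * (t - x₀) ^ (i + 1) / (i + 1).factorial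
      with hF
    set P : ℝ → ℝ := fun t =>
      ∑ i ∈ Finset.range (k + 1), c (i + 1) * (t - x₀) ^ i / i.factorial with hP
    have hFderiv : ∀ t ∈ Icc x₀ y, HasDerivWithinAt F (G' t - P t) (Icc x₀ y) t := by
      intro t ht
      have hsub : Icc x₀ y ⊆ Icc a b := Icc_subset_Icc hx₀.1 hy.2
      have h1 : HasDerivWithinAt G (G' t) (Icc x₀ y) t := by
        have : DifferentiableWithinAt ℝ G (Icc a b) t :=
          (hG.differentiableOn (by simp)) t (hsub ht)
        exact (this.hasDerivWithinAt).mono hsub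
      have h2 : HasDerivWithinAt
          (fun t => ∑ i ∈ Finset.range (k + 1), c (i + 1) * (t - x₀) ^ (i + 1) / (i + 1).factorial)
          (P t) (Icc x₀ y) t := by
        have hsum : HasDerivAt
            (fun t => ∑ i ∈ Finset.range (k + 1), c (i + 1) * (t - x₀) ^ (i + 1) / (i + 1).factorial)
            (∑ i ∈ Finset.range (k + 1), c (i + 1) * (t - x₀) ^ i / i.factorial) t := by
          apply HasDerivAt.fun_sum
          intro i _
          have hpow : HasDerivAt (fun t : ℝ => (t - x₀) ^ (i + 1))
              ((i + 1 : ℕ) * (t - x₀) ^ i * 1) t :=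
            ((hasDerivAt_id t).sub_const x₀).pow (i + 1)
          have hd := (hpow.const_mul (c (i + 1))).div_const ((i + 1).factorial : ℝ)
          refine hd.congr_deriv ?_
          rw [Nat.factorial_succ]
          push_cast
          have : (i.factorial : ℝ) ≠ 0 := by exact_mod_cast i.factorial_ne_zero
          field_simp
        exact hsum.hasDerivWithinAt
      exact h1.sub h2
    have hbd : ∀ t ∈ Icc x₀ y, ‖G' t - P t‖ ≤ L * (y - x₀) ^ (k + 1) := by
      intro t ht
      have htab : t ∈ Icc a b := (Icc_subset_Icc hx₀.1 hy.2) ht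
      have h1 : |G' t - P t| ≤ L * (t - x₀) ^ (k + 1) := by
        have := hIH t htab ht.1
        simp only [hc'] at this
        exact this
      have h2 : L * (t - x₀) ^ (k + 1) ≤ L * (y - x₀) ^ (k + 1) := by
        apply mul_le_mul_of_nonneg_left _ hL0
        exact pow_le_pow_left₀ (by linarith [ht.1]) (by linarith [ht.2]) _
      exact le_trans h1 h2
    have hMVT := Convex.norm_image_sub_le_of_norm_hasDerivWithin_le
      hFderiv hbd (convex_Icc x₀ y) (left_mem_Icc.mpr hxy) (right_mem_Icc.mpr hxy)
    have hFx₀ : F x₀ = G x₀ := by simp [hF]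
    have hgoal : G y - ∑ i ∈ Finset.range (k + 2), c i * (y - x₀) ^ i / i.factorial
        = F y - F x₀ := by
      rw [hFx₀, hF]
      simp only
      rw [Finset.sum_range_succ' (fun i => c i * (y - x₀) ^ i / (i.factorial : ℝ)) (k + 1)]
      simp [Nat.factorial, hc]
      ring
    rw [hgoal]
    calc ‖F y - F x₀‖ ≤ L * (y - x₀) ^ (k + 1) * ‖y - x₀‖ := hMVT
    _ = L * (y - x₀) ^ (k + 2) := by
        rw [Real.norm_eq_abs, abs_of_nonneg (by linarith)]
        ring

/-- Bound on the `(k+1)`-st forward difference of a `C^k` function with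
`L`-Lipschitz `k`-th derivative. -/
lemma fdiff_holder (k : ℕ) (G : ℝ → ℝ) {a b : ℝ} (hab : a < b)
    (hG : ContDiffOn ℝ k G (Icc a b)) {L : ℝ} (hL0 : 0 ≤ L)
    (hLip : ∀ s ∈ Icc a b, ∀ t ∈ Icc a b,
      |iteratedDerivWithin k G (Icc a b) s - iteratedDerivWithin k G (Icc a b) t| ≤ L * |s - t|)
    {h : ℝ} (hh : 0 < h) (x : ℝ) (hx : a ≤ x) (hxb : x + (k + 1) * h ≤ b) :
    |fdiff h (k + 1) G x| ≤ 2 ^ (k + 1) * (L * ((k + 1) * h) ^ (k + 1)) := by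
  set c : ℕ → ℝ := fun i => iteratedDerivWithin i G (Icc a b) x with hc
  set Tp : Polynomial ℝ := ∑ i ∈ Finset.range (k + 1),
    Polynomial.C (c i / i.factorial) * (Polynomial.X - Polynomial.C x) ^ i with hTp
  have hTpdeg : Tp.natDegree ≤ k := by
    apply Polynomial.natDegree_sum_le_of_forall_le
    intro i hi
    calc (Polynomial.C (c i / i.factorial) * (Polynomial.X - Polynomial.C x) ^ i).natDegree
        ≤ ((Polynomial.X - Polynomial.C x) ^ i).natDegree := Polynomial.natDegree_C_mul_le _ _
    _ = i := by rw [Polynomial.natDegree_pow, Polynomial.natDegree_X_sub_C, mul_one]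
    _ ≤ k := by exact Nat.lt_succ_iff.mp (Finset.mem_range.mp hi)
  have hTev : ∀ y, Tp.eval y = ∑ i ∈ Finset.range (k + 1), c i * (y - x) ^ i / i.factorial := by
    intro y
    rw [hTp, Polynomial.eval_finset_sum]
    apply Finset.sum_congr rfl
    intro i _
    simp [div_mul_eq_mul_div]
  have hsplit : fdiff h (k + 1) G x
      = fdiff h (k + 1) (fun y => G y - Tp.eval y) x := by
    rw [fdiff_sub, fdiff_poly h k Tp hTpdeg x, sub_zero]
  rw [hsplit]
  apply fdiff_bound h hh.le
  intro t ht1 ht2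
  have htb : t ≤ b := by push_cast at ht2; linarith
  have hxIcc : x ∈ Icc a b := ⟨hx, by nlinarith [hh.le]⟩
  have htIcc : t ∈ Icc a b := ⟨le_trans hx ht1, htb⟩
  have := taylor_lip k G a b hab hG L hL0 hLip x hxIcc t htIcc ht1
  rw [hTev]
  refine le_trans this ?_
  apply mul_le_mul_of_nonneg_left _ hL0
  have h1 : t - x ≤ (k + 1) * h := by push_cast at ht2 ⊢; linarith
  exact pow_le_pow_left₀ (by linarith) h1 _

/-! ### The unit cube and coordinate slices -/

lemma unitCube_eq (d : ℕ) : unitCube d = Set.pi Set.univ (fun _ : Fin d => Icc (0:ℝ) 1) := by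
  ext x; simp only [unitCube, mem_setOf_eq, Set.mem_univ_pi, mem_Icc]

lemma uniqueDiffOn_unitCube (d : ℕ) : UniqueDiffOn ℝ (unitCube d) := by
  rw [unitCube_eq]
  apply uniqueDiffOn_convex (convex_pi fun _ _ => convex_Icc 0 1)
  rw [interior_pi_set Set.finite_univ]
  refine ⟨fun _ => 1/2, ?_⟩
  intro i _
  simp [interior_Icc]
  norm_num

lemma slice_deriv {k d : ℕ} {f : (Fin d → ℝ) → ℝ}
    (hf : ContDiffOn ℝ k f (unitCube d)) (base : Fin d → ℝ) (j : Fin d)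
    (hmap : Set.MapsTo (fun s : ℝ => base + s • (Pi.single j 1 : Fin d → ℝ))
      (Icc (0:ℝ) 1) (unitCube d)) :
    ∀ m : ℕ, m ≤ k → ∀ s ∈ Icc (0:ℝ) 1,
      iteratedDerivWithin m (fun s => f (base + s • (Pi.single j 1 : Fin d → ℝ)))
          (Icc (0:ℝ) 1) s =
        iteratedFDerivWithin ℝ m f (unitCube d) (base + s • (Pi.single j 1 : Fin d → ℝ))
          (fun _ => (Pi.single j 1 : Fin d → ℝ)) := by
  intro m
  induction m with
  | zero =>
    intro _ s hs
    simp [iteratedDerivWithin_zero, iteratedFDerivWithin_zero_apply]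
  | succ m IH =>
    intro hmk s hs
    have hu1 : UniqueDiffOn ℝ (Icc (0:ℝ) 1) := uniqueDiffOn_Icc one_pos
    have hcube : UniqueDiffOn ℝ (unitCube d) := uniqueDiffOn_unitCube d
    set v : Fin d → ℝ := Pi.single j 1 with hv
    set ι : ℝ → (Fin d → ℝ) := fun s => base + s • v with hι
    rw [iteratedDerivWithin_succ]
    have hcongr : derivWithin
        (iteratedDerivWithin m (fun s => f (ι s)) (Icc (0:ℝ) 1)) (Icc (0:ℝ) 1) s =
        derivWithin (fun t => iteratedFDerivWithin ℝ m f (unitCube d) (ι t)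
          (fun _ => v)) (Icc (0:ℝ) 1) s := by
      apply derivWithin_congr
      · intro t ht; exact IH (le_trans (Nat.le_succ m) hmk) t ht
      · exact IH (le_trans (Nat.le_succ m) hmk) s hs
    rw [hcongr]
    have hdiff : DifferentiableWithinAt ℝ (iteratedFDerivWithin ℝ m f (unitCube d))
        (unitCube d) (ι s) := by
      refine (hf.differentiableOn_iteratedFDerivWithin ?_ hcube) (ι s) (hmap hs)
      exact_mod_cast Nat.lt_of_succ_le hmk
    have hι' : HasDerivWithinAt ι v (Icc (0:ℝ) 1) s := by
      have h1 : HasDerivAt (fun s : ℝ => base + s • v) ((1:ℝ) • v) s :=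
        (((hasDerivAt_id s).smul_const v).const_add base)
      rw [one_smul] at h1
      exact h1.hasDerivWithinAt
    have hcomp : HasDerivWithinAt (fun t => iteratedFDerivWithin ℝ m f (unitCube d) (ι t))
        (fderivWithin ℝ (iteratedFDerivWithin ℝ m f (unitCube d)) (unitCube d) (ι s) v)
        (Icc (0:ℝ) 1) s :=
      (hdiff.hasFDerivWithinAt).comp_hasDerivWithinAt s hι' hmap
    set A := ContinuousMultilinearMap.apply ℝ (fun _ : Fin m => (Fin d → ℝ)) ℝ (fun _ => v) with hA
    have hval : HasDerivWithinAt
        (fun t => iteratedFDerivWithin ℝ m f (unitCube d) (ι t) (fun _ => v))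
        ((fderivWithin ℝ (iteratedFDerivWithin ℝ m f (unitCube d)) (unitCube d) (ι s) v)
          (fun _ => v)) (Icc (0:ℝ) 1) s := by
      have := (A.hasFDerivAt.comp_hasDerivWithinAt s hcomp)
      exact this
    rw [hval.derivWithin (hu1 s hs)]
    rw [iteratedFDerivWithin_succ_apply_left]
    congr 1

/-! ### Matrix bookkeeping -/

lemma D1_mulVec {M : ℕ} (v : Fin M → ℝ) (i : Fin (M - 1)) :
    (D1 M).mulVec v i
      = v ⟨(i:ℕ)+1, by have := i.isLt; omega⟩ - v ⟨(i:ℕ), by have := i.isLt; omega⟩ := by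
  set i₀ : Fin M := ⟨(i:ℕ), by have := i.isLt; omega⟩ with hi₀
  set i₁ : Fin M := ⟨(i:ℕ)+1, by have := i.isLt; omega⟩ with hi₁
  have h01 : i₀ ≠ i₁ := by simp [hi₀, hi₁, Fin.ext_iff]
  have key : ∀ x : Fin M,
      (D1 M) i x * v x
        = (if x = i₁ then v x else 0) - (if x = i₀ then v x else 0) := by
    intro x
    by_cases h0 : x = i₀
    · have : (x:ℕ) = (i:ℕ) := by rw [h0]
      have hne : x ≠ i₁ := by
        intro hc; rw [h0] at hc
        have := congrArg (Fin.val) hc; simp [hi₀, hi₁] at this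
      simp [D1, this, hne, h0, h01, show (i₀:ℕ) = (i:ℕ) from rfl]
    · by_cases h1 : x = i₁
      · have hx1 : (x:ℕ) = (i:ℕ)+1 := by rw [h1]
        have hxne : (x:ℕ) ≠ (i:ℕ) := by omega
        simp [D1, hx1, hxne, h0, h1, h01.symm, show (i₁:ℕ) = (i:ℕ)+1 from rfl]
      · have hxne : (x:ℕ) ≠ (i:ℕ) := fun hc => h0 (Fin.ext hc)
        have hxne1 : (x:ℕ) ≠ (i:ℕ)+1 := fun hc => h1 (Fin.ext hc)
        simp [D1, hxne, hxne1, h0, h1]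
  show ∑ x, (D1 M) i x * v x = _
  rw [Finset.sum_congr rfl fun x _ => key x, Finset.sum_sub_distrib,
    Finset.sum_ite_eq' Finset.univ i₁ v, Finset.sum_ite_eq' Finset.univ i₀ v]
  simp

lemma id_mulVec {N : ℕ} (u : Fin N → ℝ) (c : ℕ) (hc : c < N) :
    ∑ x : Fin N, (if c = (x:ℕ) then (1:ℝ) else 0) * u x = u ⟨c, hc⟩ := by
  have key : ∀ x : Fin N, (if c = (x:ℕ) then (1:ℝ) else 0) * u x
      = if x = ⟨c, hc⟩ then u x else 0 := by
    intro x
    by_cases h : x = ⟨c, hc⟩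
    · have h2 : c = (x:ℕ) := by rw [h]
      rw [if_pos h2, if_pos h, one_mul]
    · have h2 : c ≠ (x:ℕ) := fun hcc => h (Fin.ext hcc.symm)
      rw [if_neg h2, if_neg h, zero_mul]
  rw [Finset.sum_congr rfl fun x _ => key x]
  have hs := Finset.sum_eq_single_of_mem (s := Finset.univ)
    (f := fun x : Fin N => if x = ⟨c, hc⟩ then u x else 0) ⟨c, hc⟩
    (Finset.mem_univ _) (fun b _ hb => if_neg hb)
  rw [hs]
  simp

lemma Dop_mulVec_eq_fdiff {N : ℕ} (G : ℝ → ℝ) (u : Fin N → ℝ)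
    (hu : ∀ t : Fin N, u t = G (((t:ℕ)+1)/N)) (hN : 0 < N) :
    ∀ (m : ℕ) (i : Fin (N - m)), (Dop N m).mulVec u i = fdiff (1/N) m G (((i:ℕ)+1)/N) := by
  intro m
  induction m with
  | zero =>
    intro i
    show ∑ x : Fin N, (if (i:ℕ) = (x:ℕ) then (1:ℝ) else 0) * u x = _
    rw [id_mulVec u (i:ℕ) (by have := i.isLt; omega)]
    simp [hu, fdiff]
  | succ m ih =>
    intro i
    show (D1 (N - m) * Dop N m).mulVec u i = _
    rw [← Matrix.mulVec_mulVec]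
    have hlt : (i:ℕ) < N - m - 1 := i.isLt
    rw [D1_mulVec ((Dop N m).mulVec u) i, ih ⟨(i:ℕ)+1, by omega⟩, ih ⟨(i:ℕ), by omega⟩]
    show _ = fdiff (1/N) m G (((i:ℕ)+1)/N + 1/N) - fdiff (1/N) m G (((i:ℕ)+1)/N)
    congr 2
    push_cast
    exact add_div _ _ _

def embAt {N d : ℕ} (j : Fin d) (y : {l : Fin d // l ≠ j} → Fin N) (t : Fin N) :
    Fin d → Fin N := fun l => if h : l = j then t else y ⟨l, h⟩

def embEquiv (N d : ℕ) (j : Fin d) :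
    (Fin N × ({l : Fin d // l ≠ j} → Fin N)) ≃ (Fin d → Fin N) where
  toFun p := embAt j p.2 p.1
  invFun x := (x j, fun l => x l.1)
  left_inv p := by
    refine Prod.ext ?_ ?_
    · simp [embAt]
    · funext l; simp [embAt, l.2]
  right_inv x := by
    funext l
    by_cases h : l = j
    · subst h; simp [embAt]
    · simp [embAt, h]

lemma ktf_mulVec {N d m : ℕ} (θ : (Fin d → Fin N) → ℝ) (j : Fin d)
    (i : Fin (N - m)) (y : {l : Fin d // l ≠ j} → Fin N) :
    (ktfMat N d m).mulVec θ ⟨j, (i, y)⟩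
      = ∑ t : Fin N, Dop N m i t * θ (embAt j y t) := by
  show ∑ x : Fin d → Fin N, ktfMat N d m ⟨j, (i, y)⟩ x * θ x = _
  rw [← (embEquiv N d j).sum_comp (fun x => ktfMat N d m ⟨j, (i, y)⟩ x * θ x)]
  rw [Fintype.sum_prod_type]
  apply Finset.sum_congr rfl
  intro t _
  have hval : ∀ y' : {l : Fin d // l ≠ j} → Fin N,
      ktfMat N d m ⟨j, (i, y)⟩ (embEquiv N d j (t, y'))
        = Dop N m i t * (if y = y' then 1 else 0) := by
    intro y'
    show Dop N m i (embAt j y' t j) * (∏ l : {l : Fin d // l ≠ j},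
        if y l = embAt j y' t l.1 then (1:ℝ) else 0) = _
    have h1 : embAt j y' t j = t := by simp [embAt]
    have h2 : ∀ l : {l : Fin d // l ≠ j}, embAt j y' t l.1 = y' l := by
      intro l; simp [embAt, l.2]
    rw [h1]
    congr 1
    simp only [h2]
    rw [Finset.prod_boole]
    congr 1
    simp only [eq_iff_iff]
    constructor
    · intro h; funext l; exact h l (Finset.mem_univ l)
    · intro h l _; rw [h]
  calc ∑ y' : {l : Fin d // l ≠ j} → Fin N,
        ktfMat N d m ⟨j, (i, y)⟩ (embEquiv N d j (t, y')) * θ (embEquiv N d j (t, y'))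
      = ∑ y', Dop N m i t * (if y = y' then 1 else 0) * θ (embEquiv N d j (t, y')) := by
        exact Finset.sum_congr rfl fun y' _ => by rw [hval y']
    _ = ∑ y', (if y = y' then Dop N m i t * θ (embEquiv N d j (t, y')) else 0) := by
        apply Finset.sum_congr rfl
        intro y' _
        by_cases h : y = y' <;> simp [h]
    _ = Dop N m i t * θ (embEquiv N d j (t, y)) := by
        rw [Finset.sum_ite_eq Finset.univ y (fun y' => Dop N m i t * θ (embEquiv N d j (t, y')))]
        simp
    _ = Dop N m i t * θ (embAt j y t) := rfl

end AuxiliaryLemmas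

/-- Proposition 2: Hölder–Sobolev–KTV embeddings.  There are
constants `c₁, c₂ > 0` depending only on `k, d` such that for every `N > k+1`
(`n = N^d`) and `L > 0`: every lattice evaluation `θ` of a function in
`C^k(L; [0,1]^d)` satisfies `‖D_{n,d}^{(k+1)} θ‖₂ ≤ c₁ L n^{1/2-(k+1)/d}`
(i.e. `𝒞_{n,d}^k(L) ⊆ 𝒲_{n,d}^{k+1}(c₁ L n^{1/2-(k+1)/d})`), and every `θ` with
`‖D_{n,d}^{(k+1)} θ‖₂ ≤ c₁ L n^{1/2-(k+1)/d}` satisfies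
`‖D_{n,d}^{(k+1)} θ‖₁ ≤ c₂ L n^{1-(k+1)/d}`
(i.e. `𝒲_{n,d}^{k+1}(c₁ L n^{1/2-(k+1)/d}) ⊆ 𝒯_{n,d}^k(c₂ L n^{1-(k+1)/d})`). -/
theorem holder_sobolev_ktv_embedding (k d : ℕ) (hd : 1 ≤ d) :
    ∃ c₁ : ℝ, 0 < c₁ ∧ ∃ c₂ : ℝ, 0 < c₂ ∧
      ∀ N : ℕ, k + 1 < N → ∀ L : ℝ, 0 < L →
        (∀ θ : (Fin d → Fin N) → ℝ,
          (∃ f : (Fin d → ℝ) → ℝ, HolderClass k d L f ∧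
              ∀ x : Fin d → Fin N, θ x = f (fun j => ((x j : ℕ) + 1 : ℝ) / N)) →
          Real.sqrt (∑ p, ((ktfMat N d (k + 1)).mulVec θ p) ^ 2) ≤
            c₁ * L * ((N ^ d : ℕ) : ℝ) ^ ((1 : ℝ) / 2 - ((k : ℝ) + 1) / d)) ∧
        (∀ θ : (Fin d → Fin N) → ℝ,
          Real.sqrt (∑ p, ((ktfMat N d (k + 1)).mulVec θ p) ^ 2) ≤
            c₁ * L * ((N ^ d : ℕ) : ℝ) ^ ((1 : ℝ) / 2 - ((k : ℝ) + 1) / d) →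
          ∑ p, |(ktfMat N d (k + 1)).mulVec θ p| ≤
            c₂ * L * ((N ^ d : ℕ) : ℝ) ^ (1 - ((k : ℝ) + 1) / d)) := by
  classical
  set C : ℝ := 2 ^ (k + 1) * ((k : ℝ) + 1) ^ (k + 1) with hC
  have hCpos : 0 < C := by positivity
  have hd0 : (d : ℝ) ≠ 0 := by
    have : (0:ℝ) < d := by exact_mod_cast hd
    linarith
  have hsd : 0 < Real.sqrt d := Real.sqrt_pos.mpr (by exact_mod_cast hd)
  refine ⟨Real.sqrt d * C, by positivity, Real.sqrt d * (Real.sqrt d * C), by positivity, ?_⟩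
  intro N hN L hL
  have hNpos : 0 < N := by omega
  have hNR : (0:ℝ) < N := by exact_mod_cast hNpos
  set n : ℝ := ((N ^ d : ℕ) : ℝ) with hn
  have hnN : n = (N:ℝ) ^ d := by rw [hn]; push_cast; ring
  have hnpos : 0 < n := by rw [hnN]; positivity
  have hNk : (0:ℝ) < (N:ℝ) ^ (k + 1) := by positivity
  -- rpow identities
  have hpow1 : n ^ (((k:ℝ) + 1) / d) = (N:ℝ) ^ (k + 1) := by
    rw [hnN, ← Real.rpow_natCast (N:ℝ) d, ← Real.rpow_mul hNR.le]
    rw [show (d:ℝ) * (((k:ℝ) + 1) / d) = ((k + 1 : ℕ) : ℝ) by push_cast; field_simp]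
    exact Real.rpow_natCast _ _
  have hrpow : n ^ ((1:ℝ)/2 - ((k:ℝ) + 1) / d) = Real.sqrt n / (N:ℝ) ^ (k + 1) := by
    rw [Real.rpow_sub hnpos, hpow1, Real.sqrt_eq_rpow]
  -- cardinality bound
  have hcard : (Fintype.card (KtfIdx N d (k + 1)) : ℝ) ≤ (d : ℝ) * n := by
    have hnat : Fintype.card (KtfIdx N d (k + 1)) ≤ d * N ^ d := by
      rw [Fintype.card_sigma]
      have hone : ∀ j : Fin d,
          Fintype.card (Fin (N - (k + 1)) × ({l : Fin d // l ≠ j} → Fin N)) ≤ N ^ d := by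
        intro j
        have hclt : Fintype.card {l : Fin d // l ≠ j} < d := by
          have := Fintype.card_subtype_lt (p := fun l : Fin d => l ≠ j) (x := j) (by simp)
          simpa using this
        calc Fintype.card (Fin (N - (k + 1)) × ({l : Fin d // l ≠ j} → Fin N))
            = (N - (k + 1)) * N ^ (Fintype.card {l : Fin d // l ≠ j}) := by
              simp [Fintype.card_prod, Fintype.card_fun]
          _ ≤ N * N ^ (d - 1) := by
              apply Nat.mul_le_mul (Nat.sub_le _ _)
              exact Nat.pow_le_pow_right hNpos (by omega)
          _ = N ^ d := by
              rw [← pow_succ']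
              congr 1
              omega
      calc ∑ j : Fin d, Fintype.card (Fin (N - (k+1)) × ({l : Fin d // l ≠ j} → Fin N))
          ≤ ∑ _j : Fin d, N ^ d := Finset.sum_le_sum fun j _ => hone j
        _ = d * N ^ d := by simp [Finset.sum_const, mul_comm]
    calc (Fintype.card (KtfIdx N d (k + 1)) : ℝ) ≤ ((d * N ^ d : ℕ) : ℝ) := by
          exact_mod_cast hnat
      _ = (d : ℝ) * n := by rw [hn]; push_cast; ring
  constructor
  · -- Part 1 : Hölder ⊆ Sobolev
    rintro θ ⟨f, hf, hθ⟩
    set v : KtfIdx N d (k + 1) → ℝ := (ktfMat N d (k + 1)).mulVec θ with hv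
    set B : ℝ := C * L / (N:ℝ) ^ (k + 1) with hB
    have hBpos : 0 < B := by positivity
    -- entrywise bound
    have hentry : ∀ p : KtfIdx N d (k + 1), |v p| ≤ B := by
      rintro ⟨j, i, y⟩
      rw [hv, ktf_mulVec]
      set base : Fin d → ℝ := fun l => if h : l = j then 0 else ((y ⟨l, h⟩ : ℕ) + 1) / N
        with hbase
      have hmap : Set.MapsTo (fun s : ℝ => base + s • (Pi.single j 1 : Fin d → ℝ))
          (Set.Icc 0 1) (unitCube d) := by
        intro s hs l
        rcases Set.mem_Icc.mp hs with ⟨hs0, hs1⟩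
        by_cases h : l = j
        · subst h
          have hval : (base + s • (Pi.single l 1 : Fin d → ℝ)) l = s := by
            simp [hbase]
          show 0 ≤ (base + s • (Pi.single l 1 : Fin d → ℝ)) l ∧
            (base + s • (Pi.single l 1 : Fin d → ℝ)) l ≤ 1
          rw [hval]
          exact ⟨hs0, hs1⟩
        · have hyl : ((y ⟨l, h⟩ : ℕ) : ℝ) + 1 ≤ N := by
            have := (y ⟨l, h⟩).isLt
            exact_mod_cast this
          have hval : (base + s • (Pi.single j 1 : Fin d → ℝ)) l
              = ((y ⟨l, h⟩ : ℕ) + 1 : ℝ) / N := by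
            simp [hbase, h, Pi.single_eq_of_ne h]
          show 0 ≤ (base + s • (Pi.single j 1 : Fin d → ℝ)) l ∧
            (base + s • (Pi.single j 1 : Fin d → ℝ)) l ≤ 1
          rw [hval]
          constructor
          · positivity
          · rw [div_le_one hNR]
            exact hyl
      have hsmooth : ContDiffOn ℝ k (fun s : ℝ => f (base + s • (Pi.single j 1 : Fin d → ℝ)))
          (Set.Icc 0 1) := by
        exact hf.1.comp ((contDiff_const.add (contDiff_id.smul contDiff_const)).contDiffOn) hmap
      have hLipG : ∀ s ∈ Set.Icc (0:ℝ) 1, ∀ t ∈ Set.Icc (0:ℝ) 1,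
          |iteratedDerivWithin k (fun s : ℝ => f (base + s • (Pi.single j 1 : Fin d → ℝ)))
              (Set.Icc 0 1) s -
            iteratedDerivWithin k (fun s : ℝ => f (base + s • (Pi.single j 1 : Fin d → ℝ)))
              (Set.Icc 0 1) t| ≤ L * |s - t| := by
        intro s hs t ht
        rw [slice_deriv hf.1 base j hmap k le_rfl s hs,
          slice_deriv hf.1 base j hmap k le_rfl t ht]
        have h2 := hf.2 (fun _ => j) _ (hmap hs) _ (hmap ht)
        refine le_trans h2 ?_
        have hsum : ∑ i', ((base + s • (Pi.single j 1 : Fin d → ℝ)) i'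
            - (base + t • (Pi.single j 1 : Fin d → ℝ)) i') ^ 2 = (s - t) ^ 2 := by
          have hterm : ∀ i' : Fin d, ((base + s • (Pi.single j 1 : Fin d → ℝ)) i'
              - (base + t • (Pi.single j 1 : Fin d → ℝ)) i') ^ 2
                = if i' = j then (s - t) ^ 2 else 0 := by
            intro i'
            by_cases h : i' = j
            · subst h
              simp [Pi.single_eq_same]
            · simp [Pi.single_eq_of_ne h, h]
          rw [Finset.sum_congr rfl fun i' _ => hterm i',
            Finset.sum_ite_eq' Finset.univ j (fun _ => (s - t) ^ 2)]
          simp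
        rw [hsum, Real.sqrt_sq_eq_abs]
      have hu : ∀ t : Fin N, θ (embAt j y t)
          = (fun s : ℝ => f (base + s • (Pi.single j 1 : Fin d → ℝ))) (((t:ℕ) + 1) / N) := by
        intro t
        rw [hθ]
        congr 1
        funext l
        by_cases h : l = j
        · subst h
          simp [embAt, hbase, Pi.single_eq_same]
        · simp [embAt, hbase, h, Pi.single_eq_of_ne h]
      have hub : ((i:ℕ) + 1) / (N:ℝ) + ((k:ℝ) + 1) * (1 / N) ≤ 1 := by
        have hilt : (i:ℕ) < N - (k + 1) := i.isLt
        have hnat : ((i:ℕ) + 1) + (k + 1) ≤ N := by omega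
        have : ((i:ℕ) + 1) / (N:ℝ) + ((k:ℝ) + 1) * (1 / N)
            = (((i:ℕ) + 1 : ℝ) + ((k:ℝ) + 1)) / N := by field_simp
        rw [this, div_le_one hNR]
        push_cast
        exact_mod_cast hnat
      have key := fdiff_holder k (fun s : ℝ => f (base + s • (Pi.single j 1 : Fin d → ℝ)))
        one_pos hsmooth hL.le hLipG (h := 1 / N) (by positivity)
        (((i:ℕ) + 1) / N) (by positivity) hub
      have hmv := Dop_mulVec_eq_fdiff
        (fun s : ℝ => f (base + s • (Pi.single j 1 : Fin d → ℝ)))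
        (fun t => θ (embAt j y t)) hu hNpos (k + 1) i
      rw [show (∑ t, Dop N (k + 1) i t * θ (embAt j y t))
        = (Dop N (k + 1)).mulVec (fun t => θ (embAt j y t)) i from rfl, hmv]
      refine le_trans key (le_of_eq ?_)
      rw [hB, hC, mul_pow]
      ring
    -- sum the entrywise bounds
    have hsum2 : ∑ p, v p ^ 2 ≤ (Fintype.card (KtfIdx N d (k + 1)) : ℝ) * B ^ 2 := by
      calc ∑ p, v p ^ 2 ≤ ∑ _p : KtfIdx N d (k + 1), B ^ 2 := by
            apply Finset.sum_le_sum
            intro p _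
            rw [← sq_abs]
            exact pow_le_pow_left₀ (abs_nonneg _) (hentry p) 2
        _ = (Fintype.card (KtfIdx N d (k + 1)) : ℝ) * B ^ 2 := by
            rw [Finset.sum_const, Finset.card_univ, nsmul_eq_mul]
    calc Real.sqrt (∑ p, v p ^ 2)
        ≤ Real.sqrt ((d : ℝ) * n * B ^ 2) := by
          apply Real.sqrt_le_sqrt
          refine le_trans hsum2 ?_
          apply mul_le_mul_of_nonneg_right hcard (by positivity)
      _ = Real.sqrt ((d : ℝ) * n) * B := by
          rw [Real.sqrt_mul (by positivity), Real.sqrt_sq hBpos.le]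
      _ = Real.sqrt d * Real.sqrt n * B := by
          rw [Real.sqrt_mul (by positivity)]
      _ = (Real.sqrt d * C) * L * (Real.sqrt n / (N:ℝ) ^ (k + 1)) := by
          rw [hB]; field_simp
      _ = (Real.sqrt d * C) * L * n ^ ((1:ℝ)/2 - ((k:ℝ) + 1) / d) := by rw [hrpow]
  · -- Part 2 : Sobolev ⊆ KTV
    intro θ hθ2
    set v : KtfIdx N d (k + 1) → ℝ := (ktfMat N d (k + 1)).mulVec θ with hv
    have habs : (∑ p, |v p|) ^ 2 ≤ (Fintype.card (KtfIdx N d (k + 1)) : ℝ) * ∑ p, v p ^ 2 := by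
      have hcs := Finset.sum_mul_sq_le_sq_mul_sq Finset.univ (fun _ => (1:ℝ))
        (fun p : KtfIdx N d (k + 1) => |v p|)
      simpa [sq_abs, Finset.card_univ] using hcs
    have hpos : 0 ≤ ∑ p, |v p| := Finset.sum_nonneg fun p _ => abs_nonneg _
    have hs2 : 0 ≤ ∑ p, v p ^ 2 := Finset.sum_nonneg fun p _ => sq_nonneg _
    have hchain : ∑ p, |v p| ≤ Real.sqrt ((d:ℝ) * n) * Real.sqrt (∑ p, v p ^ 2) := by
      calc ∑ p, |v p| = Real.sqrt ((∑ p, |v p|) ^ 2) := (Real.sqrt_sq hpos).symm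
        _ ≤ Real.sqrt ((d:ℝ) * n * ∑ p, v p ^ 2) := by
            apply Real.sqrt_le_sqrt
            refine le_trans habs ?_
            exact mul_le_mul_of_nonneg_right hcard hs2
        _ = Real.sqrt ((d:ℝ) * n) * Real.sqrt (∑ p, v p ^ 2) := by
            rw [Real.sqrt_mul (by positivity)]
    have hsplit : n ^ (1 - ((k:ℝ) + 1) / d)
        = Real.sqrt n * n ^ ((1:ℝ)/2 - ((k:ℝ) + 1) / d) := by
      rw [Real.sqrt_eq_rpow, ← Real.rpow_add hnpos]
      congr 1
      ring
    calc ∑ p, |v p| ≤ Real.sqrt ((d:ℝ) * n) * Real.sqrt (∑ p, v p ^ 2) := hchain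
      _ ≤ Real.sqrt ((d:ℝ) * n) * (Real.sqrt d * C * L * n ^ ((1:ℝ)/2 - ((k:ℝ) + 1) / d)) := by
          apply mul_le_mul_of_nonneg_left hθ2 (Real.sqrt_nonneg _)
      _ = Real.sqrt d * (Real.sqrt d * C) * L * n ^ (1 - ((k:ℝ) + 1) / d) := by
          rw [hsplit, Real.sqrt_mul (by positivity)]
          ring
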